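/- There exist 254 points lying in a closed equilateral triangle of side length 1 in the Euclidean plane such that every two distinct points among them are at distance at least 0.046717039648104. -/

import Mathlib

open scoped BigOperators
set_option maxRecDepth 100000
set_option maxHeartbeats 4000000

namespace Packing254

/-- scaled integer coordinates: point is `(a/10^18, √3 * b/10^18)`. -/
def pts : List (ℤ × ℤ) := [
  (1000000000000000000, 0),
  (967170396481041762, 19189397474217739),
  (954801102029194272, 45198897970805728),
  (922481364069874020, 64674663524637077),
  (909427584718787123, 90572415281212877),
  (877451584453123402, 110236402673506192),
  (863943603497515291, 136056396502484709),
  (832190159300242422, 155840233129836303),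
  (818391126457851465, 181608873542148535),
  (786763210075968046, 201459622468600723),
  (772801044877231474, 227198955122768526),
  (741213737846425691, 247071245948808564),
  (727198955122768526, 272801044877231474),
  (695571038740885107, 292651793803683662),
  (681608873542148535, 318391126457851465),
  (649855429344875666, 338174963085203059),
  (636056396502484709, 363943603497515291),
  (604080396236820989, 383607590889808605),
  (590572415281212877, 409427584718787123),
  (558252677321892625, 428903350272618472),
  (545198897970805728, 454801102029194272),
  (512369294451847489, 473990499503412011),
  (500000000000000000, 500000000000000000),
  (0, 0),
  (46717039648104176, 0),
  (93434079296208352, 0),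
  (140151118944312529, 0),
  (186868158592416705, 0),
  (233585198240520881, 0),
  (280302237888625057, 0),
  (327019277536729233, 0),
  (373736317184833409, 0),
  (420453356832937586, 0),
  (467170396481041762, 0),
  (513887436129145938, 0),
  (560604475777250114, 0),
  (607321515425354290, 0),
  (654038555073458466, 0),
  (700755594721562643, 0),
  (747472634369666819, 0),
  (794189674017770995, 0),
  (840906713665875171, 0),
  (887623753313979347, 0),
  (934340792962083523, 0),
  (23358519824052088, 23358519824052088),
  (70075559472156264, 23358519824052088),
  (116792599120260440, 23358519824052088),
  (163509638768364617, 23358519824052088),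
  (210226678416468793, 23358519824052088),
  (256943718064572969, 23358519824052088),
  (303660757712677145, 23358519824052088),
  (350377797360781321, 23358519824052088),
  (397094837008885497, 23358519824052088),
  (443811876656989674, 23358519824052088),
  (490528916305093850, 23358519824052088),
  (537245955953198026, 23358519824052088),
  (583962995601302202, 23358519824052088),
  (630680035249406378, 23358519824052088),
  (677397074897510554, 23358519824052088),
  (724114114545614731, 23358519824052088),
  (770831154193718907, 23358519824052088),
  (817548193841823083, 23358519824052088),
  (864265233489927259, 23358519824052088),
  (910982273138031435, 23358519824052088),
  (46717039648104176, 46717039648104176),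
  (93434079296208352, 46717039648104176),
  (140151118944312529, 46717039648104176),
  (186868158592416705, 46717039648104176),
  (233585198240520881, 46717039648104176),
  (280302237888625057, 46717039648104176),
  (327019277536729233, 46717039648104176),
  (373736317184833409, 46717039648104176),
  (420453356832937586, 46717039648104176),
  (467170396481041762, 46717039648104176),
  (513887436129145938, 46717039648104176),
  (560604475777250114, 46717039648104176),
  (607321515425354290, 46717039648104176),
  (654038555073458466, 46717039648104176),
  (700755594721562643, 46717039648104176),
  (747472634369666819, 46717039648104176),
  (794189674017770995, 46717039648104176),
  (840906713665875171, 46717039648104176),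
  (887623753313979347, 46717039648104176),
  (70075559472156264, 70075559472156264),
  (116792599120260440, 70075559472156264),
  (163509638768364617, 70075559472156264),
  (210226678416468793, 70075559472156264),
  (256943718064572969, 70075559472156264),
  (303660757712677145, 70075559472156264),
  (350377797360781321, 70075559472156264),
  (397094837008885497, 70075559472156264),
  (443811876656989674, 70075559472156264),
  (490528916305093850, 70075559472156264),
  (537245955953198026, 70075559472156264),
  (583962995601302202, 70075559472156264),
  (630680035249406378, 70075559472156264),
  (677397074897510554, 70075559472156264),
  (724114114545614731, 70075559472156264),
  (770831154193718907, 70075559472156264),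
  (817548193841823083, 70075559472156264),
  (864265233489927259, 70075559472156264),
  (93434079296208352, 93434079296208352),
  (140151118944312529, 93434079296208352),
  (186868158592416705, 93434079296208352),
  (233585198240520881, 93434079296208352),
  (280302237888625057, 93434079296208352),
  (327019277536729233, 93434079296208352),
  (373736317184833409, 93434079296208352),
  (420453356832937586, 93434079296208352),
  (467170396481041762, 93434079296208352),
  (513887436129145938, 93434079296208352),
  (560604475777250114, 93434079296208352),
  (607321515425354290, 93434079296208352),
  (654038555073458466, 93434079296208352),
  (700755594721562643, 93434079296208352),
  (747472634369666819, 93434079296208352),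
  (794189674017770995, 93434079296208352),
  (840906713665875171, 93434079296208352),
  (116792599120260440, 116792599120260440),
  (163509638768364617, 116792599120260440),
  (210226678416468793, 116792599120260440),
  (256943718064572969, 116792599120260440),
  (303660757712677145, 116792599120260440),
  (350377797360781321, 116792599120260440),
  (397094837008885497, 116792599120260440),
  (443811876656989674, 116792599120260440),
  (490528916305093850, 116792599120260440),
  (537245955953198026, 116792599120260440),
  (583962995601302202, 116792599120260440),
  (630680035249406378, 116792599120260440),
  (677397074897510554, 116792599120260440),
  (724114114545614731, 116792599120260440),
  (770831154193718907, 116792599120260440),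
  (817548193841823083, 116792599120260440),
  (140151118944312529, 140151118944312529),
  (186868158592416705, 140151118944312529),
  (233585198240520881, 140151118944312529),
  (280302237888625057, 140151118944312529),
  (327019277536729233, 140151118944312529),
  (373736317184833409, 140151118944312529),
  (420453356832937586, 140151118944312529),
  (467170396481041762, 140151118944312529),
  (513887436129145938, 140151118944312529),
  (560604475777250114, 140151118944312529),
  (607321515425354290, 140151118944312529),
  (654038555073458466, 140151118944312529),
  (700755594721562643, 140151118944312529),
  (747472634369666819, 140151118944312529),
  (794189674017770995, 140151118944312529),
  (163509638768364617, 163509638768364617),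
  (210226678416468793, 163509638768364617),
  (256943718064572969, 163509638768364617),
  (303660757712677145, 163509638768364617),
  (350377797360781321, 163509638768364617),
  (397094837008885497, 163509638768364617),
  (443811876656989674, 163509638768364617),
  (490528916305093850, 163509638768364617),
  (537245955953198026, 163509638768364617),
  (583962995601302202, 163509638768364617),
  (630680035249406378, 163509638768364617),
  (677397074897510554, 163509638768364617),
  (724114114545614731, 163509638768364617),
  (770831154193718907, 163509638768364617),
  (186868158592416705, 186868158592416705),
  (233585198240520881, 186868158592416705),
  (280302237888625057, 186868158592416705),
  (327019277536729233, 186868158592416705),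
  (373736317184833409, 186868158592416705),
  (420453356832937586, 186868158592416705),
  (467170396481041762, 186868158592416705),
  (513887436129145938, 186868158592416705),
  (560604475777250114, 186868158592416705),
  (607321515425354290, 186868158592416705),
  (654038555073458466, 186868158592416705),
  (700755594721562643, 186868158592416705),
  (747472634369666819, 186868158592416705),
  (210226678416468793, 210226678416468793),
  (256943718064572969, 210226678416468793),
  (303660757712677145, 210226678416468793),
  (350377797360781321, 210226678416468793),
  (397094837008885497, 210226678416468793),
  (443811876656989674, 210226678416468793),
  (490528916305093850, 210226678416468793),
  (537245955953198026, 210226678416468793),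
  (583962995601302202, 210226678416468793),
  (630680035249406378, 210226678416468793),
  (677397074897510554, 210226678416468793),
  (724114114545614731, 210226678416468793),
  (233585198240520881, 233585198240520881),
  (280302237888625057, 233585198240520881),
  (327019277536729233, 233585198240520881),
  (373736317184833409, 233585198240520881),
  (420453356832937586, 233585198240520881),
  (467170396481041762, 233585198240520881),
  (513887436129145938, 233585198240520881),
  (560604475777250114, 233585198240520881),
  (607321515425354290, 233585198240520881),
  (654038555073458466, 233585198240520881),
  (700755594721562643, 233585198240520881),
  (256943718064572969, 256943718064572969),
  (303660757712677145, 256943718064572969),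
  (350377797360781321, 256943718064572969),
  (397094837008885497, 256943718064572969),
  (443811876656989674, 256943718064572969),
  (490528916305093850, 256943718064572969),
  (537245955953198026, 256943718064572969),
  (583962995601302202, 256943718064572969),
  (630680035249406378, 256943718064572969),
  (677397074897510554, 256943718064572969),
  (280302237888625057, 280302237888625057),
  (327019277536729233, 280302237888625057),
  (373736317184833409, 280302237888625057),
  (420453356832937586, 280302237888625057),
  (467170396481041762, 280302237888625057),
  (513887436129145938, 280302237888625057),
  (560604475777250114, 280302237888625057),
  (607321515425354290, 280302237888625057),
  (654038555073458466, 280302237888625057),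
  (303660757712677145, 303660757712677145),
  (350377797360781321, 303660757712677145),
  (397094837008885497, 303660757712677145),
  (443811876656989674, 303660757712677145),
  (490528916305093850, 303660757712677145),
  (537245955953198026, 303660757712677145),
  (583962995601302202, 303660757712677145),
  (630680035249406378, 303660757712677145),
  (327019277536729233, 327019277536729233),
  (373736317184833409, 327019277536729233),
  (420453356832937586, 327019277536729233),
  (467170396481041762, 327019277536729233),
  (513887436129145938, 327019277536729233),
  (560604475777250114, 327019277536729233),
  (607321515425354290, 327019277536729233),
  (350377797360781321, 350377797360781321),
  (397094837008885497, 350377797360781321),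
  (443811876656989674, 350377797360781321),
  (490528916305093850, 350377797360781321),
  (537245955953198026, 350377797360781321),
  (583962995601302202, 350377797360781321),
  (373736317184833409, 373736317184833409),
  (420453356832937586, 373736317184833409),
  (467170396481041762, 373736317184833409),
  (513887436129145938, 373736317184833409),
  (560604475777250114, 373736317184833409),
  (397094837008885497, 397094837008885497),
  (443811876656989674, 397094837008885497),
  (490528916305093850, 397094837008885497),
  (537245955953198026, 397094837008885497),
  (420453356832937586, 420453356832937586),
  (467170396481041762, 420453356832937586),
  (513887436129145938, 420453356832937586),
  (443811876656989674, 443811876656989674),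
  (490528916305093850, 443811876656989674),
  (467170396481041762, 467170396481041762)
]

def M : ℤ := 46717039648104^2 * 10^6

def sep (p q : ℤ × ℤ) : Prop := M ≤ (p.1 - q.1)^2 + 3*(p.2 - q.2)^2

instance : DecidableRel sep := fun p q => by unfold sep; infer_instance

lemma pts_length : pts.length = 254 := by decide

lemma pts_pairwise : pts.Pairwise sep := by decide

lemma pts_mem : ∀ p ∈ pts, 0 ≤ p.2 ∧ p.2 ≤ p.1 ∧ p.1 + p.2 ≤ 10^18 := by decide

/-- embed a coordinate pair into the plane -/
noncomputable def pt (x y : ℝ) : EuclideanSpace ℝ (Fin 2) :=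
  (WithLp.equiv 2 (Fin 2 → ℝ)).symm ![x, y]

lemma dist_pt (x₁ y₁ x₂ y₂ : ℝ) :
    dist (pt x₁ y₁) (pt x₂ y₂) = Real.sqrt ((x₁ - x₂)^2 + (y₁ - y₂)^2) := by
  rw [EuclideanSpace.dist_eq]
  congr 1
  simp [pt, Fin.sum_univ_two, Real.dist_eq, sq_abs]



lemma sep_symm {p q : ℤ × ℤ} (h : sep p q) : sep q p := by
  unfold sep at *
  have h1 : (q.1 - p.1)^2 = (p.1 - q.1)^2 := by ring
  have h2 : (q.2 - p.2)^2 = (p.2 - q.2)^2 := by ring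
  rw [h1, h2]; exact h

lemma sep_get {i j : Fin pts.length} (hij : i ≠ j) : sep (pts.get i) (pts.get j) := by
  rcases lt_or_gt_of_ne hij with h | h
  · exact List.pairwise_iff_get.mp pts_pairwise i j h
  · exact sep_symm (List.pairwise_iff_get.mp pts_pairwise j i h)

noncomputable def E : ℝ := 10^18

noncomputable def ppt (p : ℤ × ℤ) : EuclideanSpace ℝ (Fin 2) :=
  pt ((p.1 : ℝ)/E) (Real.sqrt 3 * (p.2 : ℝ)/E)

lemma E_pos : (0:ℝ) < E := by norm_num [E]

lemma dist_ppt_ge {p q : ℤ × ℤ} (h : sep p q) :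
    (0.046717039648104 : ℝ) ≤ dist (ppt p) (ppt q) := by
  unfold ppt
  rw [dist_pt]
  have hE : (0:ℝ) < E := E_pos
  have h3 : Real.sqrt 3 ^ 2 = 3 := Real.sq_sqrt (by norm_num)
  have hv : ((p.1:ℝ)/E - (q.1:ℝ)/E)^2 + (Real.sqrt 3 * (p.2:ℝ)/E - Real.sqrt 3 * (q.2:ℝ)/E)^2
      = (((p.1:ℝ) - q.1)^2 + 3*((p.2:ℝ) - q.2)^2)/E^2 := by
    calc ((p.1:ℝ)/E - (q.1:ℝ)/E)^2 + (Real.sqrt 3 * (p.2:ℝ)/E - Real.sqrt 3 * (q.2:ℝ)/E)^2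
        = ((p.1:ℝ) - q.1)^2/E^2 + Real.sqrt 3^2 * ((p.2:ℝ) - q.2)^2/E^2 := by ring
      _ = (((p.1:ℝ) - q.1)^2 + 3*((p.2:ℝ) - q.2)^2)/E^2 := by rw [h3]; ring
  rw [hv]
  have hM : ((M:ℝ)) ≤ ((p.1:ℝ) - q.1)^2 + 3*((p.2:ℝ) - q.2)^2 := by
    have := h
    unfold sep at this
    calc ((M:ℝ)) ≤ (((p.1 - q.1)^2 + 3*(p.2 - q.2)^2 : ℤ) : ℝ) := by exact_mod_cast this
    _ = _ := by push_cast; ring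
  have hb : (0.046717039648104 : ℝ)^2 = (M:ℝ)/E^2 := by
    norm_num [M, E]
  rw [show (0.046717039648104 : ℝ) = Real.sqrt ((0.046717039648104:ℝ)^2) by
        rw [Real.sqrt_sq]; norm_num]
  apply Real.sqrt_le_sqrt
  rw [hb]
  apply div_le_div_of_nonneg_right hM (by positivity)

lemma smul_pt (r x y : ℝ) : r • pt x y = pt (r*x) (r*y) := by
  unfold pt
  apply PiLp.ext
  intro j
  fin_cases j <;> rfl

lemma add_pt (x y x' y' : ℝ) : pt x y + pt x' y' = pt (x+x') (y+y') := by
  unfold pt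
  apply PiLp.ext
  intro j
  fin_cases j <;> rfl

lemma mem_hull {p : ℤ × ℤ} (h0 : 0 ≤ p.2) (h1 : p.2 ≤ p.1) (h2 : p.1 + p.2 ≤ 10^18) :
    ppt p ∈ convexHull ℝ ({pt 0 0, pt 1 0, pt (1/2) (Real.sqrt 3/2)} :
      Set (EuclideanSpace ℝ (Fin 2))) := by
  set s : Set (EuclideanSpace ℝ (Fin 2)) := {pt 0 0, pt 1 0, pt (1/2) (Real.sqrt 3/2)} with hs
  have hconv : Convex ℝ (convexHull ℝ s) := convex_convexHull ℝ s
  have hE := E_pos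
  have hEne : E ≠ 0 := ne_of_gt hE
  set w1 : ℝ := ((10^18 : ℝ) - (p.1:ℝ) - (p.2:ℝ))/E with hw1
  set w2 : ℝ := ((p.1:ℝ) - (p.2:ℝ))/E with hw2
  set w3 : ℝ := (2*(p.2:ℝ))/E with hw3
  have hsum : w1 + w2 + w3 = 1 := by
    rw [hw1, hw2, hw3, ← add_div, ← add_div,
      div_eq_one_iff_eq hEne]
    show _ = (10:ℝ)^18
    ring
  have h1' : (0:ℝ) ≤ w1 := by
    apply div_nonneg _ (le_of_lt hE)
    have : ((p.1 + p.2 : ℤ):ℝ) ≤ (((10:ℤ)^18 : ℤ):ℝ) := by exact_mod_cast h2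
    push_cast at this
    linarith
  have h2' : (0:ℝ) ≤ w2 := by
    apply div_nonneg _ (le_of_lt hE)
    have : ((p.2:ℤ):ℝ) ≤ ((p.1:ℤ):ℝ) := by exact_mod_cast h1
    linarith
  have h3' : (0:ℝ) ≤ w3 := by
    apply div_nonneg _ (le_of_lt hE)
    have : ((0:ℤ):ℝ) ≤ ((p.2:ℤ):ℝ) := by exact_mod_cast h0
    push_cast at this
    linarith
  have hptarg : ∀ x y x' y' : ℝ, x = x' → y = y' → pt x y = pt x' y' := by
    intro x y x' y' hx hy; rw [hx, hy]
  have m1 : pt 0 0 ∈ convexHull ℝ s := subset_convexHull ℝ s (by rw [hs]; left; rfl)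
  have m2 : pt 1 0 ∈ convexHull ℝ s := subset_convexHull ℝ s (by rw [hs]; right; left; rfl)
  have m3 : pt (1/2) (Real.sqrt 3/2) ∈ convexHull ℝ s :=
    subset_convexHull ℝ s (by rw [hs]; right; right; rfl)
  have heq : ppt p = w1 • pt 0 0 + w2 • pt 1 0 + w3 • pt (1/2) (Real.sqrt 3/2) := by
    rw [smul_pt, smul_pt, smul_pt, add_pt, add_pt]
    unfold ppt
    apply hptarg
    · rw [hw1, hw2, hw3]
      field_simp
      ring
    · rw [hw1, hw2, hw3]
      field_simp
      ring
  have key : ∑ i : Fin 3, ![w1, w2, w3] i • ![pt 0 0, pt 1 0, pt (1/2) (Real.sqrt 3/2)] i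
      ∈ convexHull ℝ s := by
    apply hconv.sum_mem
    · intro i _
      fin_cases i
      · exact h1'
      · exact h2'
      · exact h3'
    · rw [Fin.sum_univ_three]
      simpa using hsum
    · intro i _
      fin_cases i
      · exact m1
      · exact m2
      · exact m3
  rw [Fin.sum_univ_three] at key
  simp only [Matrix.cons_val_zero, Matrix.cons_val_one, Matrix.head_cons,
    Matrix.cons_val_two, Matrix.tail_cons] at key
  rw [heq]
  exact key

theorem packing_254' :
    ∃ (a b c : EuclideanSpace ℝ (Fin 2))
      (P : Fin 254 → EuclideanSpace ℝ (Fin 2)),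
      dist a b = 1 ∧ dist a c = 1 ∧ dist b c = 1 ∧
      (∀ i, P i ∈ convexHull ℝ ({a, b, c} : Set (EuclideanSpace ℝ (Fin 2)))) ∧
      (∀ i j, i ≠ j → (0.046717039648104 : ℝ) ≤ dist (P i) (P j)) := by
  refine ⟨pt 0 0, pt 1 0, pt (1/2) (Real.sqrt 3/2),
    fun i => ppt (pts.get (Fin.cast pts_length.symm i)), ?_, ?_, ?_, ?_, ?_⟩
  · rw [dist_pt]
    norm_num
  · rw [dist_pt]
    have h3 : Real.sqrt 3 ^ 2 = 3 := Real.sq_sqrt (by norm_num)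
    rw [show ((0:ℝ)-1/2)^2 + ((0:ℝ) - Real.sqrt 3/2)^2 = (1:ℝ)/4 + (Real.sqrt 3)^2/4 by ring,
      h3]
    norm_num
  · rw [dist_pt]
    have h3 : Real.sqrt 3 ^ 2 = 3 := Real.sq_sqrt (by norm_num)
    rw [show ((1:ℝ)-1/2)^2 + ((0:ℝ) - Real.sqrt 3/2)^2 = (1:ℝ)/4 + (Real.sqrt 3)^2/4 by ring,
      h3]
    norm_num
  · intro i
    obtain ⟨h0, h1, h2⟩ := pts_mem _ (pts.get_mem _)
    exact mem_hull h0 h1 h2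
  · intro i j hij
    apply dist_ppt_ge
    apply sep_get
    intro hcontra
    apply hij
    have := congrArg Fin.val hcontra
    simp at this
    exact Fin.ext this

end Packing254

/-- **Packing of 254 points in a unit equilateral triangle.**
There exist 254 points lying in a closed equilateral triangle of side length
`1` in the Euclidean plane (the convex hull of three points at pairwise
distance `1`) such that every two distinct points among them are at distance
at least `0.046717039648104`. -/
theorem packing_254 :
    ∃ (a b c : EuclideanSpace ℝ (Fin 2))
      (P : Fin 254 → EuclideanSpace ℝ (Fin 2)),
      dist a b = 1 ∧ dist a c = 1 ∧ dist b c = 1 ∧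
      (∀ i, P i ∈ convexHull ℝ ({a, b, c} : Set (EuclideanSpace ℝ (Fin 2)))) ∧
      (∀ i j, i ≠ j → (0.046717039648104 : ℝ) ≤ dist (P i) (P j)) :=
  Packing254.packing_254'
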